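/- Let H be a complex Hilbert space, let S : H → H be a continuous linear self-adjoint map, and let K : H → H be a compact linear map. Then every accumulation point in ℂ of the set (spectrum of S + K) \ (spectrum of S) belongs to the spectrum of S. In particular, the spectrum of S + K outside the spectrum of S is a discrete subset of ℂ \ spectrum(S). -/

import Mathlib

open Filter ContinuousLinearMap

/-- If `1 - b ∘ a` is invertible then so is `1 - a ∘ b`. -/
lemma aux_isUnit_one_sub_comp {𝕜 : Type*} [NontriviallyNormedField 𝕜]
    {X Y : Type*} [NormedAddCommGroup X] [NormedSpace 𝕜 X]
    [NormedAddCommGroup Y] [NormedSpace 𝕜 Y]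
    (a : Y →L[𝕜] X) (b : X →L[𝕜] Y) (h : IsUnit (1 - b ∘L a)) :
    IsUnit (1 - a ∘L b) := by
  obtain ⟨u, hu⟩ := h
  set c : Y →L[𝕜] Y := ↑u⁻¹ with hc
  have h1 : ∀ y, c y - b (a (c y)) = y := by
    intro y
    have := DFunLike.congr_fun u.mul_inv y
    simpa [hu, ContinuousLinearMap.mul_apply, sub_apply, comp_apply] using this
  have h2 : ∀ y, c (y - b (a y)) = y := by
    intro y
    have := DFunLike.congr_fun u.inv_mul y
    simpa [hu, ContinuousLinearMap.mul_apply, sub_apply, comp_apply] using this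
  refine ⟨⟨1 - a ∘L b, 1 + a ∘L c ∘L b, ?_, ?_⟩, rfl⟩
  · ext x
    have h3 := congrArg a (h1 (b x))
    rw [map_sub] at h3
    simp only [ContinuousLinearMap.mul_apply, sub_apply, comp_apply, add_apply, one_apply_eq_self,
      map_add]
    rw [← h3]; abel
  · ext x
    simp only [ContinuousLinearMap.mul_apply, sub_apply, comp_apply, add_apply, one_apply_eq_self]
    rw [map_sub b, h2 (b x)]; abel

open Filter ContinuousLinearMap Metric

/-- A compact operator on a Hilbert space can be approximated in norm by finite rank
operators obtained by projecting onto a finite dimensional subspace. -/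
lemma aux_exists_finiteRank {H : Type*} [NormedAddCommGroup H] [InnerProductSpace ℂ H]
    [CompleteSpace H] (K : H →L[ℂ] H) (hK : IsCompactOperator (⇑K)) {ε : ℝ} (hε : 0 < ε) :
    ∃ (W : Submodule ℂ H) (_ : FiniteDimensional ℂ W) (F' : H →L[ℂ] ↥W),
      ‖K - W.subtypeL ∘L F'‖ ≤ ε := by
  have hcpt : IsCompact (closure (⇑K '' closedBall 0 1)) :=
    hK.isCompact_closure_image_closedBall 1
  obtain ⟨t, htf, hcover⟩ := (Metric.totallyBounded_iff).mp hcpt.totallyBounded ε hε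
  refine ⟨Submodule.span ℂ t, FiniteDimensional.span_of_finite ℂ htf, ?_⟩
  set W := Submodule.span ℂ t with hW
  haveI : FiniteDimensional ℂ W := FiniteDimensional.span_of_finite ℂ htf
  refine ⟨(W.orthogonalProjectionOnto) ∘L K, ?_⟩
  have key : ∀ x : H, ‖x‖ ≤ 1 → ‖K x - (W.orthogonalProjectionOnto (K x) : H)‖ ≤ ε := by
    intro x hx
    have hKx : K x ∈ ⋃ y ∈ t, ball y ε := by
      apply hcover
      exact subset_closure ⟨x, by simpa using hx, rfl⟩
    simp only [Set.mem_iUnion, mem_ball, exists_prop] at hKx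
    obtain ⟨y, hyt, hy⟩ := hKx
    have hyW : y ∈ W := Submodule.subset_span hyt
    have hmin : ‖K x - (W.orthogonalProjectionOnto (K x) : H)‖ ≤ ‖K x - y‖ := by
      rw [Submodule.coe_orthogonalProjectionOnto_apply, Submodule.starProjection_minimal]
      exact ciInf_le ⟨0, fun z hz => by rcases hz with ⟨w, rfl⟩; positivity⟩ (⟨y, hyW⟩ : W)
    calc ‖K x - (W.orthogonalProjectionOnto (K x) : H)‖ ≤ ‖K x - y‖ := hmin
      _ ≤ ε := by rw [← dist_eq_norm]; exact le_of_lt hy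
  refine ContinuousLinearMap.opNorm_le_bound _ hε.le fun x => ?_
  rcases eq_or_ne x 0 with rfl | hx0
  · simp
  · have hxpos : (0:ℝ) < ‖x‖ := norm_pos_iff.mpr hx0
    set u : H := ‖x‖⁻¹ • x with hu
    have hunorm : ‖u‖ ≤ 1 := by
      rw [hu, norm_smul]
      simp [norm_inv, inv_mul_cancel₀ hxpos.ne']
    have hxu : x = (‖x‖ : ℝ) • u := by
      rw [hu, smul_smul, mul_inv_cancel₀ hxpos.ne', one_smul]
    have happ : (K - (Submodule.span ℂ t).subtypeL ∘L ((W.orthogonalProjectionOnto) ∘L K)) x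
        = (‖x‖ : ℝ) • ((K - (Submodule.span ℂ t).subtypeL ∘L ((W.orthogonalProjectionOnto) ∘L K)) u) := by
      conv_lhs => rw [hxu]
      rw [ContinuousLinearMap.map_smul_of_tower]
    rw [happ, norm_smul, Real.norm_of_nonneg hxpos.le, mul_comm]
    have : ‖(K - (Submodule.span ℂ t).subtypeL ∘L ((W.orthogonalProjectionOnto) ∘L K)) u‖
        = ‖K u - (W.orthogonalProjectionOnto (K u) : H)‖ := by
      simp [ContinuousLinearMap.sub_apply, ContinuousLinearMap.comp_apply, hW]
    rw [this]
    exact mul_le_mul_of_nonneg_right (key u hunorm) hxpos.le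

open ContinuousLinearMap

lemma aux_isUnit_clm_iff_det {W : Type*} [NormedAddCommGroup W] [NormedSpace ℂ W]
    [FiniteDimensional ℂ W] (M : W →L[ℂ] W) :
    IsUnit M ↔ LinearMap.det (M : W →ₗ[ℂ] W) ≠ 0 := by
  constructor
  · rintro ⟨u, rfl⟩
    have hlin : IsUnit ((u : W →L[ℂ] W) : W →ₗ[ℂ] W) := by
      refine ⟨⟨((u : W →L[ℂ] W) : W →ₗ[ℂ] W), ((↑u⁻¹ : W →L[ℂ] W) : W →ₗ[ℂ] W), ?_, ?_⟩, rfl⟩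
      · ext x
        exact DFunLike.congr_fun u.mul_inv x
      · ext x
        exact DFunLike.congr_fun u.inv_mul x
    exact isUnit_iff_ne_zero.mp (LinearMap.isUnit_det _ hlin)
  · intro h
    let e : W ≃ₗ[ℂ] W := LinearMap.equivOfDetNeZero (M : W →ₗ[ℂ] W) h
    let e' : W ≃L[ℂ] W := e.toContinuousLinearEquiv
    refine ⟨⟨M, (e'.symm : W →L[ℂ] W), ?_, ?_⟩, rfl⟩
    · ext x
      have : M (e'.symm x) = e (e.symm x) := rfl
      simp [ContinuousLinearMap.mul_apply, this]
    · ext x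
      have : (e'.symm : W →L[ℂ] W) (M x) = e.symm (e x) := rfl
      simp [ContinuousLinearMap.mul_apply, this]

open Complex Set

/-- The complement (in `ℂ`) of a bounded set of reals is preconnected. -/
lemma aux_isPreconnected_compl {E : Set ℂ} (him : ∀ z ∈ E, z.im = 0) {M : ℝ}
    (hM : ∀ z ∈ E, ‖z‖ ≤ M) : IsPreconnected Eᶜ := by
  have seg_im : ∀ u v : ℂ, ∀ z ∈ segment ℝ u v, ∃ a b : ℝ, 0 ≤ a ∧ 0 ≤ b ∧ a + b = 1 ∧
      z = a • u + b • v := by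
    intro u v z hz
    obtain ⟨a, b, ha, hb, hab, hz⟩ := hz
    exact ⟨a, b, ha, hb, hab, hz.symm⟩
  have hI : (I : ℂ) ∈ Eᶜ := fun h => by simpa using him I h
  apply isPreconnected_of_forall (I : ℂ)
  intro y hy
  by_cases hyim : 0 ≤ y.im
  · refine ⟨segment ℝ y (y.re + I) ∪ segment ℝ (y.re + I) I, ?_, ?_, ?_, ?_⟩
    · rintro z (hz | hz) <;>
        obtain ⟨a, b, ha, hb, hab, rfl⟩ := seg_im _ _ _ hz <;> intro hzE <;>
        have him0 := him _ hzE <;>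
        simp only [Complex.add_im, Complex.smul_im, Complex.ofReal_im, Complex.I_im,
          smul_eq_mul] at him0
      · have hb0 : b = 0 := by nlinarith [mul_nonneg ha hyim]
        have ha1 : a = 1 := by linarith
        rw [hb0, ha1] at hzE
        simp at hzE
        exact hy hzE
      · linarith
    · exact Or.inr (right_mem_segment _ _ _)
    · exact Or.inl (left_mem_segment _ _ _)
    · exact IsPreconnected.union (y.re + I) (right_mem_segment _ _ _) (left_mem_segment _ _ _)
        (convex_segment _ _).isPreconnected (convex_segment _ _).isPreconnected
  · push_neg at hyim
    set R : ℝ := M + 1 with hR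
    refine ⟨((segment ℝ y (y.re - I) ∪ segment ℝ (y.re - I) ((R:ℂ) - I)) ∪
        segment ℝ ((R:ℂ) - I) ((R:ℂ) + I)) ∪ segment ℝ ((R:ℂ) + I) I, ?_, ?_, ?_, ?_⟩
    · rintro z (((hz | hz) | hz) | hz) <;>
        obtain ⟨a, b, ha, hb, hab, rfl⟩ := seg_im _ _ _ hz <;> intro hzE <;>
        have him0 := him _ hzE <;>
        simp only [Complex.add_im, Complex.sub_im, Complex.smul_im, Complex.ofReal_im,
          Complex.I_im, smul_eq_mul] at him0
      · -- him0 : a * y.im + b * (0 - 1) = 0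
        have hb0 : b = 0 := by nlinarith [mul_nonpos_of_nonneg_of_nonpos ha hyim.le]
        have ha1 : a = 1 := by linarith
        rw [hb0, ha1] at hzE
        simp at hzE
        exact hy hzE
      · linarith
      · -- z = a•(R-I) + b•(R+I) : real part R, contradiction with the norm bound
        have hnorm := hM _ hzE
        have hM0 : (0:ℝ) ≤ M := le_trans (norm_nonneg _) hnorm
        have hre : (a • ((R:ℂ) - I) + b • ((R:ℂ) + I)).re = R := by
          simp only [Complex.add_re, Complex.smul_re, Complex.sub_re, Complex.ofReal_re,
            Complex.I_re, smul_eq_mul]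
          linear_combination R * hab
        have hRnorm : R ≤ ‖a • ((R:ℂ) - I) + b • ((R:ℂ) + I)‖ := by
          calc R = (a • ((R:ℂ) - I) + b • ((R:ℂ) + I)).re := hre.symm
            _ ≤ |(a • ((R:ℂ) - I) + b • ((R:ℂ) + I)).re| := le_abs_self _
            _ ≤ ‖a • ((R:ℂ) - I) + b • ((R:ℂ) + I)‖ := Complex.abs_re_le_norm _
        linarith
      · linarith
    · exact Or.inr (right_mem_segment _ _ _)
    · exact Or.inl (Or.inl (Or.inl (left_mem_segment _ _ _)))
    · refine IsPreconnected.union ((R:ℂ) + I) ?_ (left_mem_segment _ _ _) ?_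
        (convex_segment _ _).isPreconnected
      · exact Or.inr (right_mem_segment _ _ _)
      · refine IsPreconnected.union ((R:ℂ) - I) ?_ (left_mem_segment _ _ _) ?_
          (convex_segment _ _).isPreconnected
        · exact Or.inr (right_mem_segment _ _ _)
        · exact IsPreconnected.union (y.re - I) (right_mem_segment _ _ _)
            (left_mem_segment _ _ _) (convex_segment _ _).isPreconnected
            (convex_segment _ _).isPreconnected

open Filter Topology ContinuousLinearMap Metric in
/-- Local structure: near a point of the resolvent set of `S` which is an accumulation point
of the spectrum of `S + K`, there is a whole ball inside the spectrum of `S + K`. -/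
lemma aux_local {H : Type*} [NormedAddCommGroup H] [InnerProductSpace ℂ H] [CompleteSpace H]
    (S K : H →L[ℂ] H) (hK : IsCompactOperator (⇑K)) {z₀ : ℂ}
    (hz₀ : z₀ ∉ spectrum ℂ S) (hacc : AccPt z₀ (𝓟 (spectrum ℂ (S + K)))) :
    ∃ r > 0, ball z₀ r ⊆ spectrum ℂ (S + K) ∧ ball z₀ r ⊆ (spectrum ℂ S)ᶜ := by
  classical
  set A : ℂ → (H →L[ℂ] H) := fun z => algebraMap ℂ (H →L[ℂ] H) z - S with hA
  have hA_diff : Differentiable ℂ A := by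
    have : A = fun z => z • (1 : H →L[ℂ] H) - S := by
      funext z; rw [hA]; simp [Algebra.algebraMap_eq_smul_one]
    rw [this]
    exact (differentiable_id.smul_const (1 : H →L[ℂ] H)).sub_const S
  set R : ℂ → (H →L[ℂ] H) := fun z => Ring.inverse (A z) with hRdef
  have hUopen : IsOpen (spectrum ℂ S)ᶜ := (spectrum.isClosed S).isOpen_compl
  have hUunit : ∀ z ∈ (spectrum ℂ S)ᶜ, IsUnit (A z) := fun z hz => spectrum.notMem_iff.mp hz
  have hRdiff : DifferentiableOn ℂ R (spectrum ℂ S)ᶜ :=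
    (hA_diff.differentiableOn).inverse hUunit
  set M : ℝ := ‖R z₀‖ + 1 with hM
  have hMpos : 0 < M := by positivity
  have hRcont : ContinuousAt R z₀ :=
    (hRdiff.differentiableAt (hUopen.mem_nhds hz₀)).continuousAt
  have hev : ∀ᶠ z in 𝓝 z₀, ‖R z‖ < M ∧ z ∈ (spectrum ℂ S)ᶜ := by
    refine Filter.Eventually.and ?_ (hUopen.mem_nhds hz₀)
    have hlt : ‖R z₀‖ < M := by rw [hM]; exact lt_add_one _
    exact (hRcont.norm.tendsto).eventually_lt_const hlt
  obtain ⟨r, hrpos, hr⟩ := Metric.eventually_nhds_iff_ball.mp hev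
  obtain ⟨W, hWfd, F', hF⟩ := aux_exists_finiteRank K hK (ε := (2*M)⁻¹) (by positivity)
  haveI : FiniteDimensional ℂ ↥W := hWfd
  set F : H →L[ℂ] H := W.subtypeL ∘L F' with hFdef
  set B : ℂ → (H →L[ℂ] H) := fun z => 1 - R z * (K - F) with hBdef
  have hBunit : ∀ z ∈ ball z₀ r, IsUnit (B z) := by
    intro z hz
    have h1 : ‖R z * (K - F)‖ < 1 := by
      calc ‖R z * (K - F)‖ ≤ ‖R z‖ * ‖K - F‖ := norm_mul_le _ _
        _ ≤ M * (2*M)⁻¹ := mul_le_mul (hr z hz).1.le hF (norm_nonneg _) hMpos.le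
        _ < 1 := by
            rw [show M * (2*M)⁻¹ = 2⁻¹ by field_simp]
            norm_num
    exact isUnit_one_sub_of_norm_lt_one h1
  set g : ℂ → (H →L[ℂ] H) := fun z => Ring.inverse (B z) * R z with hgdef
  have hRball : DifferentiableOn ℂ R (ball z₀ r) := hRdiff.mono (fun z hz => (hr z hz).2)
  have hgdiff : DifferentiableOn ℂ g (ball z₀ r) := by
    have hBdiff : DifferentiableOn ℂ B (ball z₀ r) :=
      (differentiableOn_const _).sub (hRball.mul (differentiableOn_const _))
    exact (hBdiff.inverse hBunit).mul hRball
  set Mop : ℂ → (↥W →L[ℂ] ↥W) := fun z => 1 - F' ∘L ((g z) ∘L W.subtypeL) with hMop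
  have hkey : ∀ z ∈ ball z₀ r, (z ∈ spectrum ℂ (S + K) ↔ ¬ IsUnit (Mop z)) := by
    intro z hz
    have hAz : IsUnit (A z) := hUunit z (hr z hz).2
    have hAinv : A z * R z = 1 := Ring.mul_inverse_cancel (A z) hAz
    have hBz : IsUnit (B z) := hBunit z hz
    have hBinv : B z * Ring.inverse (B z) = 1 := Ring.mul_inverse_cancel (B z) hBz
    have factor1 : algebraMap ℂ (H →L[ℂ] H) z - (S + K) = A z * (1 - R z * K) := by
      rw [mul_sub, mul_one, ← mul_assoc, hAinv, one_mul, hA, sub_sub]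
    have factor2 : 1 - R z * K = B z * (1 - g z * F) := by
      rw [mul_sub, mul_one, hgdef]
      rw [show B z * (Ring.inverse (B z) * R z * F) = (B z * Ring.inverse (B z)) * (R z * F) by
        noncomm_ring]
      rw [hBinv, one_mul, hBdef]
      noncomm_ring
    have step1 : z ∈ spectrum ℂ (S + K) ↔ ¬ IsUnit (1 - g z * F) := by
      rw [spectrum.mem_iff, factor1, factor2, ← mul_assoc]
      rw [show A z * B z = ↑(hAz.unit * hBz.unit) by
        rw [Units.val_mul, hAz.unit_spec, hBz.unit_spec]]
      rw [Units.isUnit_units_mul]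
    rw [step1]
    apply not_congr
    have hcomp : 1 - g z * F = 1 - (g z ∘L W.subtypeL) ∘L F' := by
      rw [hFdef, ContinuousLinearMap.mul_def, ContinuousLinearMap.comp_assoc]
    rw [hcomp, hMop]
    exact ⟨fun h => aux_isUnit_one_sub_comp F' (g z ∘L W.subtypeL) h,
      fun h => aux_isUnit_one_sub_comp (g z ∘L W.subtypeL) F' h⟩
  -- the determinant function
  set n := Module.finrank ℂ ↥W with hn
  let bW : Module.Basis (Fin n) ℂ ↥W := Module.finBasis ℂ ↥W
  set d : ℂ → ℂ := fun z => LinearMap.det ((Mop z : ↥W →L[ℂ] ↥W) : ↥W →ₗ[ℂ] ↥W) with hd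
  have hdet_unit : ∀ z, ¬ IsUnit (Mop z) ↔ d z = 0 := by
    intro z
    rw [hd, aux_isUnit_clm_iff_det (Mop z), not_not]
  have hddiff : DifferentiableOn ℂ d (ball z₀ r) := by
    have hent : ∀ i j : Fin n, DifferentiableOn ℂ
        (fun z => (LinearMap.toMatrix bW bW ((Mop z : ↥W →L[ℂ] ↥W) : ↥W →ₗ[ℂ] ↥W)) i j)
        (ball z₀ r) := by
      intro i j
      have heq : (fun z => (LinearMap.toMatrix bW bW ((Mop z : ↥W →L[ℂ] ↥W) : ↥W →ₗ[ℂ] ↥W)) i j)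
          = fun z => (LinearMap.toContinuousLinearMap (bW.coord i))
              (bW j - F' (g z (W.subtypeL (bW j)))) := by
        funext z
        rw [LinearMap.toMatrix_apply]
        simp [hMop, Module.Basis.coord_apply]
      rw [heq]
      apply DifferentiableOn.clm_apply (differentiableOn_const _)
      apply DifferentiableOn.sub (differentiableOn_const _)
      apply DifferentiableOn.clm_apply (differentiableOn_const _)
      exact hgdiff.clm_apply (differentiableOn_const _)
    have hdm : d = fun z =>
        Matrix.det (LinearMap.toMatrix bW bW ((Mop z : ↥W →L[ℂ] ↥W) : ↥W →ₗ[ℂ] ↥W)) := by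
      funext z; rw [hd]; exact (LinearMap.det_toMatrix bW _).symm
    rw [hdm]
    have hde : (fun z =>
        Matrix.det (LinearMap.toMatrix bW bW ((Mop z : ↥W →L[ℂ] ↥W) : ↥W →ₗ[ℂ] ↥W)))
        = fun z => ∑ σ : Equiv.Perm (Fin n), (Equiv.Perm.sign σ : ℤ) *
            ∏ i, (LinearMap.toMatrix bW bW ((Mop z : ↥W →L[ℂ] ↥W) : ↥W →ₗ[ℂ] ↥W)) (σ i) i := by
      funext z; rw [Matrix.det_apply']
    rw [hde]
    apply DifferentiableOn.fun_sum
    intro σ _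
    exact ((DifferentiableOn.fun_finset_prod (fun i _ => hent (σ i) i))).const_mul _
  have hfreq : ∃ᶠ z in 𝓝[≠] z₀, d z = 0 := by
    rw [frequently_nhdsWithin_iff]
    have h1 : ∃ᶠ y in 𝓝 z₀, y ≠ z₀ ∧ y ∈ spectrum ℂ (S + K) :=
      accPt_iff_frequently.mp hacc
    have h2 : ∀ᶠ y in 𝓝 z₀, y ∈ ball z₀ r := Metric.ball_mem_nhds z₀ hrpos
    refine (h1.and_eventually h2).mono ?_
    rintro y ⟨⟨hne, hy⟩, hyb⟩
    exact ⟨(hdet_unit y).mp ((hkey y hyb).mp hy), hne⟩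
  have hEq : Set.EqOn d 0 (ball z₀ r) :=
    (hddiff.analyticOnNhd isOpen_ball).eqOn_zero_of_preconnected_of_frequently_eq_zero
      (convex_ball z₀ r).isPreconnected (mem_ball_self hrpos) hfreq
  refine ⟨r, hrpos, fun z hz => ?_, fun z hz => (hr z hz).2⟩
  exact (hkey z hz).mpr ((hdet_unit z).mpr (by simpa using hEq hz))

open Filter Topology Metric in
/-- Accumulation statement in Propositions 4.2.1 and 4.3.1: for a bounded self-adjoint
operator `S` and a compact operator `K` on a complex Hilbert space, every accumulation
point of `spectrum(S+K) \ spectrum(S)` lies in `spectrum(S)`; in particular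
`spectrum(S+K) \ spectrum(S)` is discrete. -/
theorem accPt_spectrum_compact_perturbation_mem_spectrum
    {H : Type*} [NormedAddCommGroup H] [InnerProductSpace ℂ H] [CompleteSpace H]
    (S K : H →L[ℂ] H) (hS : IsSelfAdjoint S) (hK : IsCompactOperator (⇑K)) :
    (∀ z : ℂ, AccPt z (Filter.principal (spectrum ℂ (S + K) \ spectrum ℂ S)) →
      z ∈ spectrum ℂ S) ∧
    DiscreteTopology ↥(spectrum ℂ (S + K) \ spectrum ℂ S) := by
  rcases subsingleton_or_nontrivial H with hH | hH
  · -- trivial space : all spectra are empty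
    have hsp : spectrum ℂ (S + K) = ∅ := by
      ext z
      simp only [Set.mem_empty_iff_false, iff_false, spectrum.mem_iff, not_not]
      exact isUnit_of_subsingleton _
    constructor
    · intro z hz
      rw [hsp, Set.empty_diff] at hz
      obtain ⟨y, hy, -⟩ := accPt_iff_nhds.mp hz Set.univ Filter.univ_mem
      exact absurd hy.2 (Set.notMem_empty y)
    · rw [hsp, Set.empty_diff]
      exact Subsingleton.discreteTopology
  · -- the interesting case
    have main : ∀ z : ℂ, z ∉ spectrum ℂ S → AccPt z (𝓟 (spectrum ℂ (S + K))) → False := by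
      intro z hzS hz
      set T : Set ℂ := {w | w ∉ spectrum ℂ S ∧ AccPt w (𝓟 (spectrum ℂ (S + K)))} with hT
      have hUopen : IsOpen (spectrum ℂ S)ᶜ := (spectrum.isClosed S).isOpen_compl
      have hTopen : IsOpen T := by
        rw [isOpen_iff_mem_nhds]
        intro w hw
        obtain ⟨r, hrpos, hball, hballU⟩ := aux_local S K hK hw.1 hw.2
        filter_upwards [ball_mem_nhds w hrpos] with v hv
        refine ⟨hballU hv, ?_⟩
        rw [accPt_iff_frequently]
        have h1 : ∀ᶠ y in 𝓝[≠] v, y ∈ spectrum ℂ (S + K) := by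
          apply eventually_nhdsWithin_of_eventually_nhds
          filter_upwards [isOpen_ball.mem_nhds hv] with y hy using hball hy
        have h2 : ∃ᶠ y in 𝓝[≠] v, y ∈ spectrum ℂ (S + K) := h1.frequently
        rw [frequently_nhdsWithin_iff] at h2
        exact h2.mono fun y hy => ⟨hy.2, hy.1⟩
      have hT'open : IsOpen ((spectrum ℂ S)ᶜ \ T) := by
        have heq : (spectrum ℂ S)ᶜ \ T
            = (spectrum ℂ S)ᶜ ∩ (derivedSet (spectrum ℂ (S + K)))ᶜ := by
          ext w
          simp only [Set.mem_diff, Set.mem_inter_iff, Set.mem_compl_iff, hT, Set.mem_setOf_eq,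
            mem_derivedSet]
          tauto
        rw [heq]
        exact hUopen.inter (isClosed_derivedSet _).isOpen_compl
      -- a far away point is in the resolvent set of `S` but not an accumulation point
      set w₀ : ℂ := ((‖S‖ + ‖S + K‖ + 1 : ℝ) : ℂ) with hw₀
      have hw₀norm : ‖w₀‖ = ‖S‖ + ‖S + K‖ + 1 := by
        rw [hw₀, Complex.norm_real]
        exact Real.norm_of_nonneg (by positivity)
      have hw₀U : w₀ ∈ (spectrum ℂ S)ᶜ := by
        intro hmem
        have := spectrum.norm_le_norm_of_mem hmem
        rw [hw₀norm] at this
        have : (0:ℝ) ≤ ‖S + K‖ := norm_nonneg _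
        linarith [spectrum.norm_le_norm_of_mem hmem, norm_nonneg (S + K)]
      have hw₀T : w₀ ∉ T := by
        intro hmem
        have hcl : w₀ ∈ closure (spectrum ℂ (S + K)) :=
          derivedSet_subset_closure _ hmem.2
        rw [(spectrum.isClosed (S + K)).closure_eq] at hcl
        have := spectrum.norm_le_norm_of_mem hcl
        rw [hw₀norm] at this
        linarith [norm_nonneg S]
      -- preconnectedness of the resolvent set of the self-adjoint operator `S`
      have hpre : IsPreconnected (spectrum ℂ S)ᶜ := by
        apply aux_isPreconnected_compl (M := ‖S‖)
        · intro v hv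
          have := hS.mem_spectrum_eq_re hv
          rw [this]
          exact Complex.ofReal_im _
        · exact fun v hv => spectrum.norm_le_norm_of_mem hv
      -- contradiction via preconnectedness
      have hsub : (spectrum ℂ S)ᶜ ⊆ T ∪ ((spectrum ℂ S)ᶜ \ T) := by
        intro v hv
        by_cases h : v ∈ T
        · exact Or.inl h
        · exact Or.inr ⟨hv, h⟩
      obtain ⟨p, hp⟩ := hpre T ((spectrum ℂ S)ᶜ \ T) hTopen hT'open hsub
        ⟨z, hzS, ⟨hzS, hz⟩⟩ ⟨w₀, hw₀U, ⟨hw₀U, hw₀T⟩⟩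
      exact hp.2.2.2 hp.2.1
    constructor
    · intro z hz
      by_contra hzS
      exact main z hzS (hz.mono (principal_mono.mpr Set.diff_subset))
    · rw [discreteTopology_subtype_iff]
      intro x hx
      by_contra hne
      have hacc : AccPt x (𝓟 (spectrum ℂ (S + K) \ spectrum ℂ S)) := by
        unfold AccPt
        exact Filter.neBot_iff.mpr hne
      exact main x hx.2 (hacc.mono (principal_mono.mpr Set.diff_subset))
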